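/- (Nonsingularity of the restricted KKT matrix) Suppose A ∈ ℝ^{m×ℓ} has Null(A) = {0}, the transversality Null(Dc(x̄)ᵀ) ∩ Ran(A) = {0} holds, and the second-order condition dᵀ Dc(x̄)ᵀ Q Dc(x̄) d + dᵀ H d > 0 holds for all nonzero d ∈ Null(Aᵀ Dc(x̄)), where H = Σ_i ȳ_i ∇²c_i(x̄) and Q is symmetric. Then the (n+m+ℓ)×(n+m+ℓ) block matrix [[H, Dc(x̄)ᵀ, 0], [−Q Dc(x̄), I_m, −AP], [Aᵀ Dc(x̄), 0, 0]] is nonsingular, where P is any ±1 diagonal ℓ×ℓ matrix. -/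

import Mathlib

open Matrix Set

noncomputable section

abbrev V (m : ℕ) := Fin m → ℝ

/-- Jacobian matrix of `c` at `xbar`. -/
def jac {n m : ℕ} (c : V n → V m) (xbar : V n) : Matrix (Fin m) (Fin n) ℝ :=
  Matrix.of fun i j => fderiv ℝ (fun x => c x i) xbar (Pi.single j 1)

/-- Hessian of the Lagrangian `x ↦ ⟨y, c(x)⟩` at `xbar`: `H = Σ_i y_i ∇²c_i(xbar)`. -/
def hess {n m : ℕ} (c : V n → V m) (y : V m) (xbar : V n) : Matrix (Fin n) (Fin n) ℝ :=
  Matrix.of fun i j =>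
    iteratedFDeriv ℝ 2 (fun x => y ⬝ᵥ c x) xbar ![Pi.single i 1, Pi.single j 1]

/-- The restricted KKT matrix `[[H, Jᵀ, 0], [−QJ, I, −AP], [AᵀJ, 0, 0]]`. -/
def kktM {n m l : ℕ} (H : Matrix (Fin n) (Fin n) ℝ) (J : Matrix (Fin m) (Fin n) ℝ)
    (Q : Matrix (Fin m) (Fin m) ℝ) (A : Matrix (Fin m) (Fin l) ℝ)
    (P : Matrix (Fin l) (Fin l) ℝ) :
    Matrix (Fin n ⊕ (Fin m ⊕ Fin l)) (Fin n ⊕ (Fin m ⊕ Fin l)) ℝ :=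
  Matrix.fromBlocks H (Matrix.fromCols Jᵀ 0)
    (Matrix.fromRows (-(Q * J)) (Aᵀ * J))
    (Matrix.fromBlocks 1 (-(A * P)) 0 0)

/-- Nonsingularity of the restricted KKT matrix under nondegeneracy,
transversality and the second-order sufficient condition. -/
theorem stmt16 {n m l : ℕ} (c : V n → V m) (hc : ContDiff ℝ 2 c)
    (xbar : V n) (ybar : V m)
    (A : Matrix (Fin m) (Fin l) ℝ)
    (Q : Matrix (Fin m) (Fin m) ℝ) (hQ : Q.IsSymm)
    (P : Matrix (Fin l) (Fin l) ℝ)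
    (hP : ∃ d : Fin l → ℝ, (∀ i, d i = 1 ∨ d i = -1) ∧ P = Matrix.diagonal d)
    (hnd : {u : Fin l → ℝ | A *ᵥ u = 0} = {0})
    (htrans : {y : V m | (jac c xbar)ᵀ *ᵥ y = 0} ∩ {y | ∃ u, y = A *ᵥ u} = {0})
    (hsosc : ∀ d : V n, d ≠ 0 → (Aᵀ * jac c xbar) *ᵥ d = 0 →
      0 < (jac c xbar *ᵥ d) ⬝ᵥ (Q *ᵥ (jac c xbar *ᵥ d))
        + d ⬝ᵥ (hess c ybar xbar *ᵥ d)) :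
    (kktM (hess c ybar xbar) (jac c xbar) Q A P).det ≠ 0 := by
  classical
  set J := jac c xbar with hJdef
  set Hm := hess c ybar xbar with hHdef
  rw [Ne, ← Matrix.exists_mulVec_eq_zero_iff]
  rintro ⟨x, hx0, hx⟩
  obtain ⟨dv, hdv, hPd⟩ := hP
  set d : V n := fun i => x (Sum.inl i) with hd
  set v : V m := fun i => x (Sum.inr (Sum.inl i)) with hv
  set w : Fin l → ℝ := fun i => x (Sum.inr (Sum.inr i)) with hw
  have hxe : x = Sum.elim d (Sum.elim v w) := by
    funext i; rcases i with i | i | i <;> rfl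
  rw [hxe, kktM, Matrix.fromBlocks_mulVec] at hx
  have eq1 : Hm *ᵥ d + Jᵀ *ᵥ v = 0 := by
    funext i
    have := congrFun hx (Sum.inl i)
    simpa [Matrix.fromCols_mulVec_sumElim] using this
  have eq2 : -((Q * J) *ᵥ d) + (v - (A * P) *ᵥ w) = 0 := by
    funext i
    have := congrFun hx (Sum.inr (Sum.inl i))
    simpa [Matrix.fromRows_mulVec, Matrix.fromBlocks_mulVec, sub_eq_add_neg,
      Matrix.neg_mulVec] using this
  have eq3 : (Aᵀ * J) *ᵥ d = 0 := by
    funext i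
    have := congrFun hx (Sum.inr (Sum.inr i))
    simpa [Matrix.fromRows_mulVec, Matrix.fromBlocks_mulVec] using this
  have hveq : v = Q *ᵥ (J *ᵥ d) + (A * P) *ᵥ w := by
    have := eq2
    rw [neg_add_eq_zero] at this
    rw [Matrix.mulVec_mulVec, this]
    abel
  -- key orthogonality: (J d) ⬝ (A u) = 0 for all u
  have horth : ∀ u : Fin l → ℝ, (J *ᵥ d) ⬝ᵥ (A *ᵥ u) = 0 := by
    intro u
    have h1 : Aᵀ *ᵥ (J *ᵥ d) = 0 := by
      rw [Matrix.mulVec_mulVec] at *; exact eq3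
    calc (J *ᵥ d) ⬝ᵥ (A *ᵥ u) = ((J *ᵥ d) ᵥ* A) ⬝ᵥ u := Matrix.dotProduct_mulVec _ _ _
      _ = (Aᵀ *ᵥ (J *ᵥ d)) ⬝ᵥ u := by rw [Matrix.mulVec_transpose]
      _ = 0 := by rw [h1, zero_dotProduct]
  have hd0 : d = 0 := by
    by_contra hdne
    have hpos := hsosc d hdne eq3
    have hdot : d ⬝ᵥ (Hm *ᵥ d) = -((J *ᵥ d) ⬝ᵥ v) := by
      have h1 : Hm *ᵥ d = -(Jᵀ *ᵥ v) := by
        rw [eq_neg_iff_add_eq_zero]; exact eq1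
      rw [h1, dotProduct_neg, Matrix.dotProduct_mulVec,
        ← Matrix.mulVec_transpose, Matrix.transpose_transpose,
        dotProduct_comm]
    rw [hdot, hveq, dotProduct_add, ← Matrix.mulVec_mulVec,
      horth (P *ᵥ w)] at hpos
    simp at hpos
  have hJv : Jᵀ *ᵥ v = 0 := by
    have := eq1; rw [hd0] at this; simpa using this
  have hvA : v = A *ᵥ (P *ᵥ w) := by
    rw [hveq, hd0]; simp [← Matrix.mulVec_mulVec]
  have hv0 : v = 0 := by
    have : v ∈ ({y : V m | Jᵀ *ᵥ y = 0} ∩ {y | ∃ u, y = A *ᵥ u}) :=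
      ⟨hJv, ⟨P *ᵥ w, hvA⟩⟩
    rw [htrans] at this
    simpa using this
  have hPw : P *ᵥ w = 0 := by
    have : P *ᵥ w ∈ {u : Fin l → ℝ | A *ᵥ u = 0} := by
      simp only [Set.mem_setOf_eq, ← hvA, hv0]
    rw [hnd] at this
    simpa using this
  have hw0 : w = 0 := by
    funext i
    have := congrFun hPw i
    rw [hPd] at this
    simp [Matrix.mulVec_diagonal] at this
    rcases this with h | h
    · rcases hdv i with h1 | h1 <;> rw [h1] at h <;> norm_num at h
    · exact h
  exact hx0 (by rw [hxe, hd0, hv0, hw0]; funext i; rcases i with i | i | i <;> simp)
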